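/- Let A(t), v(t) be differentiable with A(t) symmetric, satisfying Ȧ = M̃A + AM̃^T + Δ[A] where M̃ = PMP, Δ[A] = AM^T(I−P) + (I−P)MA, P = I − vv^T/|v|², and v̇ = −M^T v with v(t) ≠ 0 for all t. If A(0)v(0) = 0 then A(t)v(t) = 0 for all t. -/

import Mathlib

open Matrix Set

private lemma mulVec_norm_le' {m : ℕ} (B : Matrix (Fin m) (Fin m) ℝ) (x : Fin m → ℝ) :
    ‖B *ᵥ x‖ ≤ (∑ i, ∑ j, |B i j|) * ‖x‖ := by
  have h0 : (0:ℝ) ≤ (∑ i, ∑ j, |B i j|) * ‖x‖ := by positivity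
  rw [pi_norm_le_iff_of_nonneg h0]
  intro i
  calc ‖(B *ᵥ x) i‖ = |∑ j, B i j * x j| := by
        simp [Matrix.mulVec, dotProduct, Real.norm_eq_abs]
    _ ≤ ∑ j, |B i j * x j| := Finset.abs_sum_le_sum_abs _ _
    _ ≤ ∑ j, |B i j| * ‖x‖ := by
        refine Finset.sum_le_sum fun j _ => ?_
        rw [abs_mul]
        exact mul_le_mul_of_nonneg_left ((Real.norm_eq_abs (x j)) ▸ norm_le_pi_norm x j)
          (abs_nonneg _)
    _ ≤ (∑ i, ∑ j, |B i j|) * ‖x‖ := by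
        rw [← Finset.sum_mul]
        refine mul_le_mul_of_nonneg_right ?_ (norm_nonneg _)
        exact Finset.single_le_sum (f := fun i => ∑ j, |B i j|)
          (fun i _ => Finset.sum_nonneg fun j _ => abs_nonneg _) (Finset.mem_univ i)

private lemma zero_of_linear_ode {m : ℕ} (B : ℝ → Matrix (Fin m) (Fin m) ℝ)
    (hB : Continuous B) (f : ℝ → Fin m → ℝ)
    (hf : ∀ s, HasDerivAt f (B s *ᵥ f s) s) (h0 : f 0 = 0)
    {t : ℝ} (ht : 0 ≤ t) : f t = 0 := by
  set φ : ℝ → ℝ := fun s => ∑ i, ∑ j, |B s i j| with hφdef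
  have hφ : Continuous φ := by
    refine continuous_finset_sum _ fun i _ => continuous_finset_sum _ fun j _ => ?_
    exact (((continuous_apply j).comp ((continuous_apply i).comp hB))).abs
  obtain ⟨K, hK⟩ := (isCompact_Icc (a := (0:ℝ)) (b := t)).exists_bound_of_continuousOn
    hφ.continuousOn
  have hfc : Continuous f := by
    rw [continuous_iff_continuousAt]; exact fun s => (hf s).continuousAt
  have key := norm_le_gronwallBound_of_norm_deriv_right_le (f := f)
    (f' := fun s => B s *ᵥ f s) (δ := 0) (K := K) (ε := 0) (a := 0) (b := t)
    hfc.continuousOn (fun s _ => (hf s).hasDerivWithinAt)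
    (by simp [h0]) ?_ t ⟨ht, le_refl t⟩
  · rwa [gronwallBound_ε0, zero_mul, norm_le_zero_iff] at key
  · intro s hs
    have h1 : ‖B s *ᵥ f s‖ ≤ φ s * ‖f s‖ := mulVec_norm_le' (B s) (f s)
    have h2 : φ s ≤ K := by
      have := hK s ⟨hs.1, hs.2.le⟩
      rwa [Real.norm_eq_abs, abs_of_nonneg (Finset.sum_nonneg fun i _ =>
        Finset.sum_nonneg fun j _ => abs_nonneg _)] at this
    calc ‖B s *ᵥ f s‖ ≤ φ s * ‖f s‖ := h1
      _ ≤ K * ‖f s‖ := mul_le_mul_of_nonneg_right h2 (norm_nonneg _)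
      _ = K * ‖f s‖ + 0 := by ring

/-- degeneracy preservation under the projected Lyapunov
equation `Ȧ = (PMP)A + A(PMP)ᵀ + AMᵀ(I−P) + (I−P)MA`, where
`P(t) = I − v(t)v(t)ᵀ/|v(t)|²` and `v̇ = −Mᵀv` with `v(t) ≠ 0`:
if `A(0)v(0) = 0` then `A(t)v(t) = 0` for all `t`. -/
theorem projected_lyapunov_preserves_degeneracy {m : ℕ}
    (M : ℝ → Matrix (Fin m) (Fin m) ℝ)
    (hM : ∀ i j, Continuous fun t => M t i j)
    (v : ℝ → Fin m → ℝ)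
    (hvne : ∀ t, v t ≠ 0)
    (hv : ∀ t i, HasDerivAt (fun s => v s i) (-((M t)ᵀ *ᵥ v t) i) t)
    (P : ℝ → Matrix (Fin m) (Fin m) ℝ)
    (hP : ∀ t, P t = 1 - (v t ⬝ᵥ v t)⁻¹ • vecMulVec (v t) (v t))
    (A : ℝ → Matrix (Fin m) (Fin m) ℝ)
    (hAsymm : ∀ t, (A t)ᵀ = A t)
    (hA : ∀ t i j, HasDerivAt (fun s => A s i j)
      (((P t * M t * P t) * A t + A t * (P t * M t * P t)ᵀ +
        A t * (M t)ᵀ * (1 - P t) + (1 - P t) * M t * A t) i j) t)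
    (hinit : A 0 *ᵥ v 0 = 0) :
    ∀ t, A t *ᵥ v t = 0 := by
  set B : ℝ → Matrix (Fin m) (Fin m) ℝ :=
    fun t => P t * M t * P t + (1 - P t) * M t with hBdef
  set w : ℝ → Fin m → ℝ := fun t => A t *ᵥ v t with hwdef
  -- continuity facts
  have hMc : Continuous M := continuous_matrix fun i j => hM i j
  have hvc : Continuous v := by
    refine continuous_pi fun i => ?_
    rw [continuous_iff_continuousAt]; exact fun s => (hv s i).continuousAt
  have hdne : ∀ t, v t ⬝ᵥ v t ≠ 0 := fun t h => hvne t (dotProduct_self_eq_zero.mp h)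
  have hdc : Continuous fun t => v t ⬝ᵥ v t := by
    simp only [dotProduct]
    exact continuous_finset_sum _ fun j _ =>
      ((continuous_apply j).comp hvc).mul ((continuous_apply j).comp hvc)
  have hPc : Continuous P := by
    have : P = fun t => 1 - (v t ⬝ᵥ v t)⁻¹ • vecMulVec (v t) (v t) := funext hP
    rw [this]
    exact continuous_const.sub ((hdc.inv₀ hdne).smul (hvc.matrix_vecMulVec hvc))
  have hBc : Continuous B :=
    ((hPc.matrix_mul hMc).matrix_mul hPc).add ((continuous_const.sub hPc).matrix_mul hMc)
  -- key algebraic facts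
  have hPv : ∀ t, P t *ᵥ v t = 0 := by
    intro t
    have hvv : vecMulVec (v t) (v t) *ᵥ v t = (v t ⬝ᵥ v t) • v t := by
      funext i
      simp only [Matrix.mulVec, dotProduct, vecMulVec_apply, Pi.smul_apply,
        smul_eq_mul]
      rw [Finset.sum_mul]
      exact Finset.sum_congr rfl fun j _ => by ring
    rw [hP, Matrix.sub_mulVec, Matrix.one_mulVec, Matrix.smul_mulVec, hvv, smul_smul,
      inv_mul_cancel₀ (hdne t), one_smul, sub_self]
  have hPT : ∀ t, (P t)ᵀ = P t := by
    intro t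
    rw [hP]
    rw [transpose_sub, transpose_one, transpose_smul]
    congr 1
    funext i j
    simp [vecMulVec_apply, Matrix.transpose_apply, mul_comm]
  have key : ∀ t,
      ((P t * M t * P t) * A t + A t * (P t * M t * P t)ᵀ +
        A t * (M t)ᵀ * (1 - P t) + (1 - P t) * M t * A t) *ᵥ v t
        + A t *ᵥ (-((M t)ᵀ *ᵥ v t)) = B t *ᵥ w t := by
    intro t
    simp only [hBdef, hwdef, Matrix.add_mulVec, Matrix.sub_mulVec, Matrix.one_mulVec,
      Matrix.transpose_mul, hPT, ← Matrix.mulVec_mulVec, hPv, Matrix.mulVec_zero,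
      Matrix.mulVec_neg, sub_zero]
    abel
  -- derivative of w
  have hw : ∀ s, HasDerivAt w (B s *ᵥ w s) s := by
    intro s
    rw [hasDerivAt_pi]
    intro i
    have hsum : HasDerivAt (fun u => ∑ j, A u i j * v u j)
        (∑ j, (((P s * M s * P s) * A s + A s * (P s * M s * P s)ᵀ +
          A s * (M s)ᵀ * (1 - P s) + (1 - P s) * M s * A s) i j * v s j
          + A s i j * (-((M s)ᵀ *ᵥ v s) j))) s :=
      HasDerivAt.fun_sum fun j _ => (hA s i j).mul (hv s j)
    have heq : (fun u => w u i) = fun u => ∑ j, A u i j * v u j := by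
      funext u; simp [hwdef, Matrix.mulVec, dotProduct]
    rw [heq]
    refine hsum.congr_deriv ?_
    have := congrFun (key s) i
    rw [← this]
    simp [Matrix.add_mulVec, Matrix.mulVec, dotProduct, Finset.sum_add_distrib, add_mul]
  -- conclude
  intro t
  rcases le_or_gt 0 t with h | h
  · exact zero_of_linear_ode B hBc w hw hinit h
  · -- time reversal
    set u : ℝ → Fin m → ℝ := fun s => w (-s) with hudef
    have hu : ∀ s, HasDerivAt u ((-B (-s)) *ᵥ u s) s := by
      intro s
      have h1 : HasDerivAt (fun x : ℝ => -x) (-1) s := (hasDerivAt_id s).neg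
      have h2 := (hw (-s)).scomp s h1
      simp only [Function.comp_def, neg_smul, one_smul] at h2
      rw [Matrix.neg_mulVec]
      exact h2
    have hBc' : Continuous fun s => -B (-s) := (hBc.comp continuous_neg).neg
    have := zero_of_linear_ode _ hBc' u hu (by simpa [hudef] using hinit)
      (t := -t) (by linarith)
    simpa [hudef] using this
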